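/- Let f_1, ..., f_D : [n] → [n] ∪ {⊥} be partial functions, each monotone on its domain (whenever i_1 < i_2 and both f(i_1) and f(i_2) are defined, f(i_1) < f(i_2)), and suppose the associated bipartite graph is a τ-vertex expander: for every subset S ⊆ [n] with |S| ≤ n/2, the neighborhood |∪_{i=1}^D f_i(S)| ≥ (1+τ)·|S| (where f_i(S) = {f_i(s) : s ∈ S, f_i(s) defined}). For each i, let A_{f_i} be the n×n matrix over a field F defined by sending the standard basis vector e_j to e_{f_i(j)} if f_i(j) is defined and to 0 otherwise. Then the family {A_{f_1}, ..., A_{f_D}} is a τ-dimension expander over F: for every subspace U ⊆ F^n with dim(U) ≤ n/2, dim(Σ_{i=1}^D A_{f_i}(U)) ≥ (1+τ)·dim(U). -/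

import Mathlib

/-- The 0/1 matrix of a partial function `f : [n] → [n] ∪ {⊥}`, sending `e_j` to `e_{f j}`
when `f j` is defined and to `0` otherwise. Its `(k, j)` entry is `1` iff `f j = some k`. -/
def matrixOfPartialFun {F : Type*} [Field F] {n : ℕ} (f : Fin n → Option (Fin n)) :
    Matrix (Fin n) (Fin n) F :=
  Matrix.of fun k j => if f j = some k then (1 : F) else 0

/-- The set of "leading coordinates" of a subspace of `F^n`. -/
def leadSet {F : Type*} [Field F] {n : ℕ} (W : Submodule F (Fin n → F)) : Set (Fin n) :=
  {k | ∃ w ∈ W, w k ≠ 0 ∧ ∀ l, k < l → w l = 0}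

lemma exists_last_nonzero {F : Type*} [Field F] {n : ℕ} {w : Fin n → F} (hw : w ≠ 0) :
    ∃ k, w k ≠ 0 ∧ ∀ l, k < l → w l = 0 := by
  classical
  have hT : (Finset.univ.filter fun k => w k ≠ 0).Nonempty := by
    by_contra h
    apply hw
    funext k
    by_contra hk
    exact h ⟨k, Finset.mem_filter.mpr ⟨Finset.mem_univ _, hk⟩⟩
  refine ⟨(Finset.univ.filter fun k => w k ≠ 0).max' hT, ?_, ?_⟩
  · have := Finset.max'_mem _ hT
    exact (Finset.mem_filter.mp this).2
  · intro l hl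
    by_contra hlne
    have : l ∈ Finset.univ.filter fun k => w k ≠ 0 :=
      Finset.mem_filter.mpr ⟨Finset.mem_univ _, hlne⟩
    exact absurd (Finset.le_max' _ _ this) (not_le.mpr hl)

lemma leadSet_mono {F : Type*} [Field F] {n : ℕ} {W V : Submodule F (Fin n → F)}
    (h : W ≤ V) : leadSet W ⊆ leadSet V := by
  rintro k ⟨w, hw, hk, hl⟩
  exact ⟨w, h hw, hk, hl⟩

/-- A family of vectors with distinct "pivot" coordinates is linearly independent. -/
lemma li_of_pivot {F : Type*} [Field F] {n : ℕ} {S : Set (Fin n)} (v : S → (Fin n → F))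
    (hv : ∀ k : S, v k (k : Fin n) ≠ 0)
    (hv2 : ∀ k : S, ∀ l, (k : Fin n) < l → v k l = 0) :
    LinearIndependent F v := by
  classical
  rw [linearIndependent_iff']
  intro t g hsum i hi
  by_contra hgi
  set T := t.filter fun j => g j ≠ 0 with hT
  have hTne : T.Nonempty := ⟨i, Finset.mem_filter.mpr ⟨hi, hgi⟩⟩
  set m := T.max' hTne with hm
  have hmT : m ∈ T := Finset.max'_mem _ hTne
  have hmt : m ∈ t := (Finset.mem_filter.mp hmT).1
  have hgm : g m ≠ 0 := (Finset.mem_filter.mp hmT).2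
  have heval : (∑ j ∈ t, g j • v j) (m : Fin n) = 0 := by rw [hsum]; rfl
  rw [Finset.sum_apply] at heval
  have hsingle : ∑ j ∈ t, (g j • v j) (m : Fin n) = g m * v m (m : Fin n) := by
    rw [Finset.sum_eq_single m]
    · simp
    · intro b hb hbm
      by_cases hgb : g b = 0
      · simp [hgb]
      · have hbT : b ∈ T := Finset.mem_filter.mpr ⟨hb, hgb⟩
        have hble : b ≤ m := Finset.le_max' _ _ hbT
        have hblt : b < m := lt_of_le_of_ne hble hbm
        have : (b : Fin n) < (m : Fin n) := hblt
        simp [hv2 b _ this]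
    · intro h; exact absurd hmt h
  rw [hsingle] at heval
  rcases mul_eq_zero.mp heval with h | h
  · exact hgm h
  · exact hv m h

lemma ncard_leadSet {F : Type*} [Field F] {n : ℕ} (W : Submodule F (Fin n → F)) :
    (leadSet W).ncard = Module.finrank F W := by
  classical
  haveI : Fintype ↥(leadSet W) := (Set.toFinite (leadSet W)).fintype
  have hcard : (leadSet W).ncard = Fintype.card ↥(leadSet W) := by
    rw [Set.ncard_eq_toFinset_card']
    simp [Set.toFinset_card]
  -- choose witnesses
  have hwit : ∀ k : ↥(leadSet W), ∃ w, w ∈ W ∧ w (k : Fin n) ≠ 0 ∧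
      ∀ l, (k : Fin n) < l → w l = 0 := by
    rintro ⟨k, w, hw, hk, hl⟩
    exact ⟨w, hw, hk, hl⟩
  choose v hvW hvk hvl using hwit
  -- lower bound: linearly independent family
  have hli : LinearIndependent F v := li_of_pivot v hvk hvl
  have hliW : LinearIndependent F (fun k : ↥(leadSet W) => (⟨v k, hvW k⟩ : ↥W)) := by
    apply LinearIndependent.of_comp W.subtype
    convert hli
    rfl
  have hle1 : Fintype.card ↥(leadSet W) ≤ Module.finrank F W :=
    hliW.fintype_card_le_finrank
  -- upper bound: injective restriction map
  let π : ↥W →ₗ[F] (↥(leadSet W) → F) :=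
    { toFun := fun w k => (w : Fin n → F) (k : Fin n)
      map_add' := by intros; rfl
      map_smul' := by intros; rfl }
  have hπ : Function.Injective π := by
    rw [← LinearMap.ker_eq_bot]
    rw [eq_bot_iff]
    rintro ⟨w, hwW⟩ hw
    simp only [LinearMap.mem_ker] at hw
    simp only [Submodule.mem_bot]
    by_contra hwne
    have hwne' : w ≠ 0 := by
      intro h; apply hwne; exact Subtype.ext h
    obtain ⟨k, hk, hl⟩ := exists_last_nonzero hwne'
    have hkmem : k ∈ leadSet W := ⟨w, hwW, hk, hl⟩
    have : w k = 0 := congrFun hw ⟨k, hkmem⟩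
    exact hk this
  have hle2 : Module.finrank F W ≤ Fintype.card ↥(leadSet W) := by
    have := LinearMap.finrank_le_finrank_of_injective hπ
    rwa [Module.finrank_fintype_fun_eq_card] at this
  omega

lemma inj_of_mono {D n : ℕ} (f : Fin D → Fin n → Option (Fin n))
    (hmono : ∀ i (j₁ j₂ k₁ k₂ : Fin n), j₁ < j₂ →
      f i j₁ = some k₁ → f i j₂ = some k₂ → k₁ < k₂)
    (i : Fin D) {j₁ j₂ k : Fin n} (h₁ : f i j₁ = some k) (h₂ : f i j₂ = some k) :
    j₁ = j₂ := by
  rcases lt_trichotomy j₁ j₂ with h | h | h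
  · exact absurd (hmono i j₁ j₂ k k h h₁ h₂) (lt_irrefl k)
  · exact h
  · exact absurd (hmono i j₂ j₁ k k h h₂ h₁) (lt_irrefl k)

lemma lead_map {F : Type*} [Field F] {D n : ℕ} (f : Fin D → Fin n → Option (Fin n))
    (hmono : ∀ i (j₁ j₂ k₁ k₂ : Fin n), j₁ < j₂ →
      f i j₁ = some k₁ → f i j₂ = some k₂ → k₁ < k₂)
    (U : Submodule F (Fin n → F)) (i : Fin D) {j k : Fin n}
    (hj : j ∈ leadSet U) (hfj : f i j = some k) :
    k ∈ leadSet (U.map (matrixOfPartialFun (F := F) (f i)).mulVecLin) := by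
  classical
  obtain ⟨w, hwU, hwj, hwl⟩ := hj
  refine ⟨(matrixOfPartialFun (F := F) (f i)).mulVec w,
    Submodule.mem_map_of_mem hwU, ?_, ?_⟩
  · -- coordinate k is w j ≠ 0
    have : (matrixOfPartialFun (F := F) (f i)).mulVec w k = w j := by
      unfold Matrix.mulVec matrixOfPartialFun
      simp only [Matrix.of_apply, dotProduct]
      rw [Finset.sum_eq_single j]
      · simp [hfj]
      · intro b _ hbj
        by_cases hb : f i b = some k
        · exact absurd (inj_of_mono f hmono i hb hfj) hbj
        · simp [hb]
      · intro h; exact absurd (Finset.mem_univ j) h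
    rw [this]; exact hwj
  · -- coordinates above k vanish
    intro l hl
    unfold Matrix.mulVec matrixOfPartialFun
    simp only [Matrix.of_apply, dotProduct]
    apply Finset.sum_eq_zero
    intro b _
    by_cases hb : f i b = some l
    · rcases lt_trichotomy b j with h | h | h
      · exact absurd (hmono i b j l k h hb hfj) (not_lt.mpr (le_of_lt hl))
      · subst h; rw [hfj] at hb
        exact absurd (Option.some.inj hb) (ne_of_lt hl)
      · rw [hwl b h, mul_zero]
    · simp [hb]

theorem monotone_expander_gives_dimension_expander {F : Type*} [Field F] {D n : ℕ} (τ : ℝ)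
    (f : Fin D → Fin n → Option (Fin n))
    (hmono : ∀ i (j₁ j₂ k₁ k₂ : Fin n), j₁ < j₂ →
      f i j₁ = some k₁ → f i j₂ = some k₂ → k₁ < k₂)
    (hexp : ∀ S : Finset (Fin n), 2 * S.card ≤ n →
      (1 + τ) * (S.card : ℝ) ≤
        (Set.ncard {k : Fin n | ∃ i, ∃ s ∈ S, f i s = some k} : ℝ))
    (U : Submodule F (Fin n → F)) (hU : 2 * Module.finrank F U ≤ n) :
    (1 + τ) * (Module.finrank F U : ℝ) ≤
      (Module.finrank F
        ↥(⨆ i, U.map (matrixOfPartialFun (F := F) (f i)).mulVecLin) : ℝ) := by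
  classical
  set V := ⨆ i, U.map (matrixOfPartialFun (F := F) (f i)).mulVecLin with hV
  set S : Finset (Fin n) := (Set.toFinite (leadSet U)).toFinset with hS
  have hScard : S.card = Module.finrank F U := by
    rw [hS, ← Set.ncard_eq_toFinset_card _ (Set.toFinite (leadSet U))]
    exact ncard_leadSet U
  have hexpS := hexp S (by rw [hScard]; exact hU)
  have hsub : {k : Fin n | ∃ i, ∃ s ∈ S, f i s = some k} ⊆ leadSet V := by
    rintro k ⟨i, s, hs, hfs⟩
    have hslead : s ∈ leadSet U := by rwa [hS, Set.Finite.mem_toFinset] at hs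
    have := lead_map f hmono U i hslead hfs
    exact leadSet_mono (le_iSup _ i) this
  have hle : ({k : Fin n | ∃ i, ∃ s ∈ S, f i s = some k}).ncard ≤ (leadSet V).ncard :=
    Set.ncard_le_ncard hsub (Set.toFinite _)
  have hVcard : (leadSet V).ncard = Module.finrank F V := ncard_leadSet V
  calc (1 + τ) * (Module.finrank F U : ℝ)
      = (1 + τ) * (S.card : ℝ) := by rw [hScard]
    _ ≤ (({k : Fin n | ∃ i, ∃ s ∈ S, f i s = some k}).ncard : ℝ) := hexpS
    _ ≤ ((leadSet V).ncard : ℝ) := by exact_mod_cast hle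
    _ = (Module.finrank F V : ℝ) := by rw [hVcard]
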